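/- Let V be a finite-dimensional real inner product space, A a symmetric positive definite bilinear form, and B a symmetric positive definite operator on V such that C₁ A(w,w) ≤ ⟨B⁻¹ w, w⟩ ≤ C₀² A(w,w) for all w ∈ V. Then the condition number of B𝔸 (where 𝔸 is the operator of A) satisfies κ(B𝔸) ≤ C₀²/C₁. -/

import Mathlib

/-- Two-sided bounds on the preconditioner imply a bound on the condition
number of the preconditioned operator B𝔸. -/
theorem stmt_4 {V : Type*} [NormedAddCommGroup V] [InnerProductSpace ℝ V]
    [FiniteDimensional ℝ V]
    (A : LinearMap.BilinForm ℝ V)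
    (hAsymm : ∀ u v, A u v = A v u) (hApos : ∀ v : V, v ≠ 0 → 0 < A v v)
    (Aop B Binv : V →ₗ[ℝ] V)
    (hAop : ∀ u v : V, (inner ℝ (Aop u) v : ℝ) = A u v)
    (hBsymm : ∀ u v : V, (inner ℝ (B u) v : ℝ) = inner ℝ u (B v))
    (hBpos : ∀ v : V, v ≠ 0 → 0 < (inner ℝ (B v) v : ℝ))
    (hBinv : Binv ∘ₗ B = LinearMap.id ∧ B ∘ₗ Binv = LinearMap.id)
    (C₁ C₀ : ℝ) (hC₁ : 0 < C₁) (hC₀ : 0 < C₀)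
    (hbound : ∀ w : V, C₁ * A w w ≤ (inner ℝ (Binv w) w : ℝ) ∧
      (inner ℝ (Binv w) w : ℝ) ≤ C₀ ^ 2 * A w w) :
    ∀ lam mu : ℝ, Module.End.HasEigenvalue (B ∘ₗ Aop) lam →
      Module.End.HasEigenvalue (B ∘ₗ Aop) mu → lam ≤ (C₀ ^ 2 / C₁) * mu := by
  have key : ∀ lam : ℝ, Module.End.HasEigenvalue (B ∘ₗ Aop) lam →
      1 / C₀ ^ 2 ≤ lam ∧ lam ≤ 1 / C₁ := by
    intro lam hlam
    obtain ⟨v, hv⟩ := hlam.exists_hasEigenvector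
    have hv0 : v ≠ 0 := hv.right
    have heig : B (Aop v) = lam • v := hv.apply_eq_smul
    have hAopv : Aop v = lam • Binv v := by
      have := congrArg Binv heig
      have h1 : Binv (B (Aop v)) = Aop v := by
        have := congrArg (fun f => f (Aop v)) hBinv.1
        simpa using this
      rw [h1] at this
      simpa using this
    set a : ℝ := A v v with ha
    set b : ℝ := (inner ℝ (Binv v) v : ℝ) with hb
    have hapos : 0 < a := hApos v hv0
    have hab : a = lam * b := by
      have : (inner ℝ (Aop v) v : ℝ) = a := hAop v v
      rw [hAopv] at this
      rw [← this]
      simp [real_inner_smul_left, hb]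
    have hb1 : C₁ * a ≤ b := (hbound v).1
    have hb2 : b ≤ C₀ ^ 2 * a := (hbound v).2
    have hbpos : 0 < b := lt_of_lt_of_le (by positivity) hb1
    have hlampos : 0 < lam := by
      rcases lt_trichotomy lam 0 with h | h | h
      · nlinarith
      · nlinarith
      · exact h
    constructor
    · rw [div_le_iff₀ (by positivity)]
      nlinarith
    · rw [le_div_iff₀ hC₁]
      nlinarith
  intro lam mu hlam hmu
  obtain ⟨_, h1⟩ := key lam hlam
  obtain ⟨h2, _⟩ := key mu hmu
  have : (C₀ ^ 2 / C₁) * (1 / C₀ ^ 2) ≤ (C₀ ^ 2 / C₁) * mu := by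
    apply mul_le_mul_of_nonneg_left h2 (by positivity)
  calc lam ≤ 1 / C₁ := h1
    _ = (C₀ ^ 2 / C₁) * (1 / C₀ ^ 2) := by field_simp
    _ ≤ (C₀ ^ 2 / C₁) * mu := this
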